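/- Euler's pentagonal number theorem: in the ring ℤ[[q]] of formal power series, the infinite product Π_{j=1}^{∞} (1 − q^j) equals Σ_{n=−∞}^{∞} (−1)^n q^{n(3n+1)/2}, i.e., it equals 1 + Σ_{n=1}^{∞} (−1)^n (q^{n(3n−1)/2} + q^{n(3n+1)/2}). -/

import Mathlib

open Finset
namespace PentAux

def Pos (t : Finset ℕ) : Prop := ∀ x ∈ t, 1 ≤ x

lemma exists_base (t : Finset ℕ) (h : t.Nonempty) :
    ∃ a, Finset.Icc a (t.max' h) ⊆ t := by
  refine ⟨t.max' h, fun x hx => ?_⟩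
  rw [Finset.mem_Icc] at hx
  have : x = t.max' h := le_antisymm hx.2 hx.1
  exact this ▸ t.max'_mem h

noncomputable def base (t : Finset ℕ) (h : t.Nonempty) : ℕ :=
  Nat.find (exists_base t h)

lemma base_subset (t : Finset ℕ) (h : t.Nonempty) :
    Finset.Icc (base t h) (t.max' h) ⊆ t := Nat.find_spec (exists_base t h)

lemma base_le (t : Finset ℕ) (h : t.Nonempty) : base t h ≤ t.max' h := by
  apply Nat.find_min'
  intro x hx; rw [Finset.mem_Icc] at hx
  have : x = t.max' h := le_antisymm hx.2 hx.1
  exact this ▸ t.max'_mem h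

lemma base_mem (t : Finset ℕ) (h : t.Nonempty) : base t h ∈ t :=
  base_subset t h (by rw [Finset.mem_Icc]; exact ⟨le_rfl, base_le t h⟩)

lemma base_pos (t : Finset ℕ) (h : t.Nonempty) (hp : Pos t) : 1 ≤ base t h := by
  by_contra hb
  have h0 : base t h = 0 := by omega
  have := hp _ (base_mem t h)
  omega

lemma base_pred_not_mem (t : Finset ℕ) (h : t.Nonempty) (hp : Pos t) :
    base t h - 1 ∉ t := by
  intro hmem
  have hb1 := base_pos t h hp
  have hmin := Nat.find_min (exists_base t h) (m := base t h - 1) (by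
    show base t h - 1 < base t h
    omega)
  apply hmin
  intro x hx
  rw [Finset.mem_Icc] at hx
  rcases eq_or_lt_of_le hx.1 with heq | hlt
  · exact heq ▸ hmem
  · exact base_subset t h (by rw [Finset.mem_Icc]; omega)

lemma base_eq (t : Finset ℕ) (h : t.Nonempty) {a : ℕ} (ha : 1 ≤ a)
    (ham : a ≤ t.max' h) (h1 : Finset.Icc a (t.max' h) ⊆ t) (h2 : a - 1 ∉ t) :
    base t h = a := by
  have hle : base t h ≤ a := Nat.find_min' _ h1
  rcases eq_or_lt_of_le hle with heq | hlt
  · exact heq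
  · exact absurd (base_subset t h (by rw [Finset.mem_Icc]; omega)) h2

noncomputable def frank (t : Finset ℕ) : Finset ℕ :=
  if h : t.Nonempty then
    if t.min' h + base t h ≤ t.max' h + 1 then
      insert (t.max' h + 1) ((t.erase (t.min' h)).erase (t.max' h - t.min' h + 1))
    else insert (t.max' h + 1 - base t h) (insert (base t h - 1) (t.erase (t.max' h)))
  else t

def IsPent (t : Finset ℕ) : Prop :=
  ∃ a : ℕ, 1 ≤ a ∧ (t = Finset.Icc a (2 * a - 1) ∨ t = Finset.Icc (a + 1) (2 * a))

variable {t : Finset ℕ}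

lemma moveA_spec (h : t.Nonempty) (hp : Pos t) (hnp : ¬ IsPent t)
    (hc : t.min' h + base t h ≤ t.max' h + 1) :
    (frank t).Nonempty ∧ Pos (frank t) ∧ (frank t).sum id = t.sum id ∧
      (frank t).card + 1 = t.card ∧ frank (frank t) = t := by
  set m := t.max' h with hm
  set s := t.min' h with hs
  set b := base t h with hb
  set e := m - s + 1 with he
  -- basic facts
  have hsm : s ≤ m := t.min'_le _ (t.max'_mem h)
  have hs1 : 1 ≤ s := hp _ (t.min'_mem h)
  have hsb : s ≤ b := t.min'_le _ (base_mem t h)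
  have hbm : b ≤ m := base_le t h
  have hbe : b ≤ e := by omega
  have hem : e ≤ m := by omega
  have het : e ∈ t := base_subset t h (by rw [Finset.mem_Icc]; omega)
  have hst : s ∈ t := t.min'_mem h
  have hm1t : m + 1 ∉ t := fun hmem => by have := t.le_max' _ hmem; omega
  have hse : s ≠ e := by
    intro hse
    apply hnp
    have hbs : b = s := by omega
    refine ⟨s, hs1, Or.inl ?_⟩
    apply Finset.Subset.antisymm
    · intro x hx
      rw [Finset.mem_Icc]
      exact ⟨t.min'_le _ hx, by have := t.le_max' _ hx; omega⟩
    · intro x hx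
      apply base_subset t h
      rw [Finset.mem_Icc] at hx ⊢
      omega
  have hslte : s < e := by
    rcases lt_or_ge s e with h1 | h1
    · exact h1
    · omega
  -- the image
  have hfr : frank t = insert (m + 1) ((t.erase s).erase e) := by
    rw [frank, dif_pos h, if_pos hc]
  set w := (t.erase s).erase e with hw
  have hewm : e ∈ t.erase s := Finset.mem_erase.2 ⟨Ne.symm hse, het⟩
  have hm1w : m + 1 ∉ w := by
    intro hx
    exact hm1t (Finset.mem_of_mem_erase (Finset.mem_of_mem_erase hx))
  have hwsub : w ⊆ t := fun x hx =>
    Finset.mem_of_mem_erase (Finset.mem_of_mem_erase hx)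
  have hne : (frank t).Nonempty := by rw [hfr]; exact Finset.insert_nonempty _ _
  -- sum
  have hsum1 : w.sum id + e = (t.erase s).sum id := Finset.sum_erase_add _ _ hewm
  have hsum2 : (t.erase s).sum id + s = t.sum id := Finset.sum_erase_add _ _ hst
  have hsumu : (frank t).sum id = t.sum id := by
    rw [hfr, Finset.sum_insert hm1w]
    simp only [id_eq] at *
    omega
  -- card
  have hcard : (frank t).card + 1 = t.card := by
    rw [hfr, Finset.card_insert_of_notMem hm1w, hw,
      Finset.card_erase_of_mem hewm, Finset.card_erase_of_mem hst]
    have h2 : 2 ≤ t.card := Finset.one_lt_card.2 ⟨s, hst, e, het, hse⟩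
    omega
  -- Pos
  have hposu : Pos (frank t) := by
    rw [hfr]
    intro x hx
    rcases Finset.mem_insert.1 hx with rfl | hx
    · omega
    · exact hp _ (hwsub hx)
  refine ⟨hne, hposu, hsumu, hcard, ?_⟩
  -- the inverse computation
  have hmaxu : (frank t).max' hne = m + 1 := by
    apply le_antisymm
    · apply Finset.max'_le
      intro x hx
      rw [hfr] at hx
      rcases Finset.mem_insert.1 hx with rfl | hx
      · exact le_rfl
      · have := t.le_max' _ (hwsub hx); omega
    · exact Finset.le_max' _ _ (by rw [hfr]; exact Finset.mem_insert_self _ _)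
  have hminu : s + 1 ≤ (frank t).min' hne := by
    apply Finset.le_min'
    intro x hx
    rw [hfr] at hx
    rcases Finset.mem_insert.1 hx with rfl | hx
    · omega
    · have h1 : x ∈ t := hwsub hx
      have h2 : x ≠ s := (Finset.mem_erase.1 (Finset.mem_of_mem_erase hx)).1
      have := t.min'_le _ h1
      omega
  have hbaseu : base (frank t) hne = e + 1 := by
    apply base_eq
    · omega
    · omega
    · rw [hmaxu]
      intro x hx
      rw [Finset.mem_Icc] at hx
      rw [hfr]
      rcases eq_or_lt_of_le hx.2 with heq | hlt
      · exact heq ▸ Finset.mem_insert_self _ _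
      · apply Finset.mem_insert_of_mem
        refine Finset.mem_erase.2 ⟨by omega, Finset.mem_erase.2 ⟨by omega, ?_⟩⟩
        exact base_subset t h (by rw [Finset.mem_Icc]; omega)
    · show e + 1 - 1 ∉ frank t
      rw [hfr]
      intro hx
      rcases Finset.mem_insert.1 (by simpa using hx) with heq | hx'
      · omega
      · exact (Finset.mem_erase.1 hx').1 rfl
  -- now compute frank (frank t)
  have hcond : ¬ ((frank t).min' hne + base (frank t) hne ≤ (frank t).max' hne + 1) := by
    rw [hbaseu, hmaxu]; omega
  rw [frank, dif_pos hne, if_neg hcond, hmaxu, hbaseu]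
  have h1 : m + 1 + 1 - (e + 1) = s := by omega
  have h2 : e + 1 - 1 = e := by omega
  rw [h1, h2, hfr, Finset.erase_insert hm1w, Finset.insert_erase hewm,
    Finset.insert_erase hst]

lemma moveB_spec (h : t.Nonempty) (hp : Pos t) (hnp : ¬ IsPent t)
    (hc : ¬ (t.min' h + base t h ≤ t.max' h + 1)) :
    (frank t).Nonempty ∧ Pos (frank t) ∧ (frank t).sum id = t.sum id ∧
      (frank t).card = t.card + 1 ∧ frank (frank t) = t := by
  set m := t.max' h with hm
  set s := t.min' h with hs
  set b := base t h with hb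
  push_neg at hc
  have hsm : s ≤ m := t.min'_le _ (t.max'_mem h)
  have hs1 : 1 ≤ s := hp _ (t.min'_mem h)
  have hsb : s ≤ b := t.min'_le _ (base_mem t h)
  have hbm : b ≤ m := base_le t h
  have hb2 : 2 ≤ b := by omega
  set p := b - 1 with hpdef
  set q := m + 1 - b with hqdef
  have hqs : q < s := by omega
  have hq1 : 1 ≤ q := by omega
  have hqt : q ∉ t := fun hq => by have := t.min'_le _ hq; omega
  have hpt : p ∉ t := base_pred_not_mem t h hp
  have hmt : m ∈ t := t.max'_mem h
  have hpq : p ≠ q := by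
    intro hpq
    apply hnp
    have hmb : m = 2 * b - 2 := by omega
    have hsbe : s = b := by omega
    refine ⟨b - 1, by omega, Or.inr ?_⟩
    have h1 : b - 1 + 1 = b := by omega
    have h2 : 2 * (b - 1) = m := by omega
    rw [h1, h2]
    apply Finset.Subset.antisymm
    · intro x hx
      rw [Finset.mem_Icc]
      exact ⟨by have := t.min'_le _ hx; omega, t.le_max' _ hx⟩
    · exact base_subset t h
  have hqp : q < p := by omega
  -- image
  have hfr : frank t = insert q (insert p (t.erase m)) := by
    rw [frank, dif_pos h, if_neg (by omega)]
  have hpem : p ∉ t.erase m := fun hx => hpt (Finset.mem_of_mem_erase hx)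
  have hqmem : q ∉ insert p (t.erase m) := by
    intro hx
    rcases Finset.mem_insert.1 hx with heq | hx'
    · omega
    · exact hqt (Finset.mem_of_mem_erase hx')
  have hne : (frank t).Nonempty := by rw [hfr]; exact Finset.insert_nonempty _ _
  have hsum1 : (t.erase m).sum id + m = t.sum id := Finset.sum_erase_add _ _ hmt
  have hsumu : (frank t).sum id = t.sum id := by
    rw [hfr, Finset.sum_insert hqmem, Finset.sum_insert hpem]
    simp only [id_eq] at *
    omega
  have hcard : (frank t).card = t.card + 1 := by
    rw [hfr, Finset.card_insert_of_notMem hqmem, Finset.card_insert_of_notMem hpem,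
      Finset.card_erase_of_mem hmt]
    have h1 : 1 ≤ t.card := Finset.card_pos.2 h
    omega
  have hposu : Pos (frank t) := by
    rw [hfr]
    intro x hx
    rcases Finset.mem_insert.1 hx with rfl | hx
    · omega
    · rcases Finset.mem_insert.1 hx with rfl | hx
      · omega
      · exact hp _ (Finset.mem_of_mem_erase hx)
  refine ⟨hne, hposu, hsumu, hcard, ?_⟩
  -- max' of image = m - 1
  have hmem_me : ∀ x, b ≤ x → x ≤ m - 1 → x ∈ t.erase m :=
    fun x h1 h2 => Finset.mem_erase.2 ⟨by omega,
      base_subset t h (by rw [Finset.mem_Icc]; omega)⟩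
  have hm1mem : m - 1 ∈ frank t := by
    rw [hfr]
    rcases eq_or_lt_of_le hbm with heq | hlt
    · -- b = m, so p = m - 1
      apply Finset.mem_insert_of_mem
      apply Finset.mem_insert.2 (Or.inl (by omega))
    · exact Finset.mem_insert_of_mem (Finset.mem_insert_of_mem (hmem_me _ (by omega) le_rfl))
  have hmaxu : (frank t).max' hne = m - 1 := by
    apply le_antisymm
    · apply Finset.max'_le
      intro x hx
      rw [hfr] at hx
      rcases Finset.mem_insert.1 hx with rfl | hx
      · omega
      · rcases Finset.mem_insert.1 hx with rfl | hx
        · omega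
        · have h1 := t.le_max' _ (Finset.mem_of_mem_erase hx)
          have h2 := (Finset.mem_erase.1 hx).1
          omega
    · exact Finset.le_max' _ _ hm1mem
  have hminu : (frank t).min' hne = q := by
    apply le_antisymm
    · exact Finset.min'_le _ _ (by rw [hfr]; exact Finset.mem_insert_self _ _)
    · apply Finset.le_min'
      intro x hx
      rw [hfr] at hx
      rcases Finset.mem_insert.1 hx with rfl | hx
      · exact le_rfl
      · rcases Finset.mem_insert.1 hx with rfl | hx
        · omega
        · have := t.min'_le _ (Finset.mem_of_mem_erase hx); omega
  have hbaseu : base (frank t) hne ≤ p := by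
    apply Nat.find_min'
    rw [hmaxu]
    intro x hx
    rw [Finset.mem_Icc] at hx
    rw [hfr]
    rcases eq_or_lt_of_le hx.1 with heq | hlt
    · exact Finset.mem_insert_of_mem (Finset.mem_insert.2 (Or.inl heq.symm))
    · exact Finset.mem_insert_of_mem (Finset.mem_insert_of_mem (hmem_me _ (by omega) hx.2))
  have hcond : (frank t).min' hne + base (frank t) hne ≤ (frank t).max' hne + 1 := by
    rw [hminu, hmaxu]; omega
  rw [frank, dif_pos hne, if_pos hcond, hmaxu, hminu]
  have h1 : m - 1 - q + 1 = p := by omega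
  have h2 : m - 1 + 1 = m := by omega
  rw [h1, h2, hfr, Finset.erase_insert hqmem, Finset.erase_insert hpem,
    Finset.insert_erase hmt]

lemma frank_spec (h : t.Nonempty) (hp : Pos t) (hnp : ¬ IsPent t) :
    (frank t).Nonempty ∧ Pos (frank t) ∧ (frank t).sum id = t.sum id ∧
      ((frank t).card + 1 = t.card ∨ (frank t).card = t.card + 1) ∧
      frank (frank t) = t := by
  by_cases hc : t.min' h + base t h ≤ t.max' h + 1
  · obtain ⟨a1, a2, a3, a4, a5⟩ := moveA_spec h hp hnp hc
    exact ⟨a1, a2, a3, Or.inl a4, a5⟩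
  · obtain ⟨a1, a2, a3, a4, a5⟩ := moveB_spec h hp hnp hc
    exact ⟨a1, a2, a3, Or.inr a4, a5⟩

-- helper facts about intervals
lemma Icc_nonempty' {a b : ℕ} (hab : a ≤ b) : (Finset.Icc a b).Nonempty :=
  ⟨a, by rw [Finset.mem_Icc]; omega⟩

lemma Icc_min' {a b : ℕ} (hab : a ≤ b) (h : (Finset.Icc a b).Nonempty) :
    (Finset.Icc a b).min' h = a := by
  apply le_antisymm
  · exact Finset.min'_le _ _ (by rw [Finset.mem_Icc]; omega)
  · exact Finset.le_min' _ _ _ (fun x hx => (Finset.mem_Icc.1 hx).1)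

lemma Icc_max' {a b : ℕ} (hab : a ≤ b) (h : (Finset.Icc a b).Nonempty) :
    (Finset.Icc a b).max' h = b := by
  apply le_antisymm
  · exact Finset.max'_le _ _ _ (fun x hx => (Finset.mem_Icc.1 hx).2)
  · exact Finset.le_max' _ _ (by rw [Finset.mem_Icc]; omega)

lemma Icc_base {a b : ℕ} (ha : 1 ≤ a) (hab : a ≤ b) (h : (Finset.Icc a b).Nonempty) :
    base (Finset.Icc a b) h = a := by
  apply base_eq _ _ ha
  · rw [Icc_max' hab]; exact hab
  · rw [Icc_max' hab]
  · rw [Finset.mem_Icc]; omega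

lemma frank_pent (hpt : IsPent t) : IsPent (frank t) := by
  obtain ⟨a, ha, hcase | hcase⟩ := hpt
  · -- t = Icc a (2a-1), frank t = Icc (a+1) (2a)
    subst hcase
    have hab : a ≤ 2 * a - 1 := by omega
    have h : (Finset.Icc a (2 * a - 1)).Nonempty := Icc_nonempty' hab
    have hmin := Icc_min' hab h
    have hmax := Icc_max' hab h
    have hbase := Icc_base ha hab h
    have hcond : (Finset.Icc a (2 * a - 1)).min' h + base _ h ≤
        (Finset.Icc a (2 * a - 1)).max' h + 1 := by
      rw [hmin, hmax, hbase]; omega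
    refine ⟨a, ha, Or.inr ?_⟩
    rw [frank, dif_pos h, if_pos hcond, hmin, hmax]
    have h1 : 2 * a - 1 - a + 1 = a := by omega
    rw [h1, Finset.Icc_erase_left, Finset.erase_eq_self.2 (by
      rw [Finset.mem_Ioc]; omega)]
    apply Finset.Subset.antisymm
    · intro x hx
      rcases Finset.mem_insert.1 hx with rfl | hx
      · rw [Finset.mem_Icc]; omega
      · rw [Finset.mem_Ioc] at hx; rw [Finset.mem_Icc]; omega
    · intro x hx
      rw [Finset.mem_Icc] at hx
      rcases eq_or_lt_of_le hx.2 with heq | hlt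
      · exact Finset.mem_insert.2 (Or.inl (by omega))
      · exact Finset.mem_insert_of_mem (by rw [Finset.mem_Ioc]; omega)
  · -- t = Icc (a+1) (2a), frank t = Icc a (2a-1)
    subst hcase
    have hab : a + 1 ≤ 2 * a := by omega
    have h : (Finset.Icc (a + 1) (2 * a)).Nonempty := Icc_nonempty' hab
    have hmin := Icc_min' hab h
    have hmax := Icc_max' hab h
    have hbase := Icc_base (by omega) hab h
    have hcond : ¬ ((Finset.Icc (a + 1) (2 * a)).min' h + base _ h ≤
        (Finset.Icc (a + 1) (2 * a)).max' h + 1) := by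
      rw [hmin, hmax, hbase]; omega
    refine ⟨a, ha, Or.inl ?_⟩
    rw [frank, dif_pos h, if_neg hcond, hmax, hbase]
    have h1 : 2 * a + 1 - (a + 1) = a := by omega
    have h2 : a + 1 - 1 = a := by omega
    rw [h1, h2, Finset.Icc_erase_right, Finset.insert_idem]
    apply Finset.Subset.antisymm
    · intro x hx
      rcases Finset.mem_insert.1 hx with rfl | hx
      · rw [Finset.mem_Icc]; omega
      · rw [Finset.mem_Ico] at hx; rw [Finset.mem_Icc]; omega
    · intro x hx
      rw [Finset.mem_Icc] at hx
      rcases eq_or_lt_of_le hx.1 with heq | hlt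
      · exact Finset.mem_insert.2 (Or.inl (by omega))
      · exact Finset.mem_insert_of_mem (by rw [Finset.mem_Ico]; omega)

lemma frank_not_pent (h : t.Nonempty) (hp : Pos t) (hnp : ¬ IsPent t) :
    ¬ IsPent (frank t) := by
  intro hpent
  have hff := (frank_spec h hp hnp).2.2.2.2
  exact hnp (hff ▸ frank_pent hpent)

-- Gauss sum for Icc
lemma sum_Icc_id_double {a b : ℕ} (ha : 1 ≤ a) (hab : a ≤ b + 1) :
    (∑ i ∈ Finset.Icc a b, i) * 2 + a * (a - 1) = (b + 1) * b := by
  have h1 : Finset.Icc a b = Finset.Ico a (b + 1) := by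
    rw [Finset.Ico_add_one_right_eq_Icc]
  have h2 : ∑ i ∈ Finset.Ico 0 a, i + ∑ i ∈ Finset.Ico a (b + 1), i
      = ∑ i ∈ Finset.Ico 0 (b + 1), i :=
    Finset.sum_Ico_consecutive _ (Nat.zero_le _) hab
  have h3 := Finset.sum_range_id_mul_two a
  have h4 := Finset.sum_range_id_mul_two (b + 1)
  rw [Finset.range_eq_Ico] at h3 h4
  have h5 : b + 1 - 1 = b := by omega
  rw [h5] at h4
  rw [h1]
  linarith [h2, h3, h4]

lemma sum_Icc_left (a : ℕ) (ha : 1 ≤ a) :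
    (∑ i ∈ Finset.Icc a (2 * a - 1), i) * 2 = a * (3 * a - 1) := by
  obtain ⟨c, rfl⟩ : ∃ c, a = c + 1 := ⟨a - 1, by omega⟩
  have h1 : 2 * (c + 1) - 1 = 2 * c + 1 := by omega
  have h2 : 3 * (c + 1) - 1 = 3 * c + 2 := by omega
  have h3 : (c + 1) - 1 = c := by omega
  have := sum_Icc_id_double (a := c + 1) (b := 2 * c + 1) (by omega) (by omega)
  rw [h3] at this
  rw [h1, h2]
  nlinarith [this]

lemma sum_Icc_right (a : ℕ) (ha : 1 ≤ a) :
    (∑ i ∈ Finset.Icc (a + 1) (2 * a), i) * 2 = a * (3 * a + 1) := by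
  obtain ⟨c, rfl⟩ : ∃ c, a = c + 1 := ⟨a - 1, by omega⟩
  have h3 : (c + 2) - 1 = c + 1 := by omega
  have := sum_Icc_id_double (a := c + 2) (b := 2 * (c + 1)) (by omega) (by omega)
  rw [h3] at this
  nlinarith [this]

lemma two_dvd_left (n : ℕ) : 2 ∣ n * (3 * n - 1) := by
  rcases Nat.even_or_odd n with ⟨m, hm⟩ | ⟨m, hm⟩
  · exact ⟨m * (3 * n - 1), by rw [hm]; ring⟩
  · refine ⟨n * (3 * m + 1), ?_⟩
    have h1 : 3 * n - 1 = 2 * (3 * m + 1) := by omega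
    rw [h1]; ring

lemma two_dvd_right (n : ℕ) : 2 ∣ n * (3 * n + 1) := by
  rcases Nat.even_or_odd n with ⟨m, hm⟩ | ⟨m, hm⟩
  · exact ⟨m * (3 * n + 1), by rw [hm]; ring⟩
  · refine ⟨n * (3 * m + 2), ?_⟩
    have h1 : 3 * n + 1 = 2 * (3 * m + 2) := by omega
    rw [h1]; ring

lemma div_left_eq {n k : ℕ} : n * (3 * n - 1) / 2 = k ↔ n * (3 * n - 1) = 2 * k := by
  obtain ⟨c, hc⟩ := two_dvd_left n
  rw [hc]
  omega

lemma div_right_eq {n k : ℕ} : n * (3 * n + 1) / 2 = k ↔ n * (3 * n + 1) = 2 * k := by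
  obtain ⟨c, hc⟩ := two_dvd_right n
  rw [hc]
  omega

lemma not_both {n k : ℕ} (hn : 1 ≤ n) (h1 : n * (3 * n - 1) = 2 * k) :
    ¬ (n * (3 * n + 1) = 2 * k) := by
  intro h2
  obtain ⟨c, rfl⟩ : ∃ c, n = c + 1 := ⟨n - 1, by omega⟩
  have h3 : 3 * (c + 1) - 1 = 3 * c + 2 := by omega
  rw [h3] at h1
  nlinarith [h1, h2]

open Classical in
lemma count (k : ℕ) (hk : 1 ≤ k) :
    ∑ t ∈ ((Finset.Icc 1 k).powerset.filter (fun t => t.sum id = k)), (-1 : ℤ) ^ t.card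
      = ∑ n ∈ Finset.Icc 1 (k + 1), (-1 : ℤ) ^ n *
          ((if n * (3 * n - 1) / 2 = k then 1 else 0)
            + (if n * (3 * n + 1) / 2 = k then 1 else 0)) := by
  classical
  set A := (Finset.Icc 1 k).powerset.filter (fun t => t.sum id = k) with hA
  have hmemA : ∀ t : Finset ℕ, t ∈ A ↔ t ⊆ Finset.Icc 1 k ∧ t.sum id = k := by
    intro t; rw [hA, Finset.mem_filter, Finset.mem_powerset]
  have hPos : ∀ t ∈ A, Pos t := by
    intro t ht x hx
    exact (Finset.mem_Icc.1 (((hmemA t).1 ht).1 hx)).1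
  have hNe : ∀ t ∈ A, t.Nonempty := by
    intro t ht
    rcases Finset.eq_empty_or_nonempty t with rfl | h
    · have := ((hmemA ∅).1 ht).2
      simp at this; omega
    · exact h
  have hmemA' : ∀ t : Finset ℕ, Pos t → t.sum id = k → t ∈ A := by
    intro t hp hsum
    refine (hmemA t).2 ⟨fun x hx => ?_, hsum⟩
    rw [Finset.mem_Icc]
    refine ⟨hp x hx, ?_⟩
    calc x = id x := rfl
    _ ≤ t.sum id := Finset.single_le_sum (fun i _ => Nat.zero_le _) hx
    _ = k := hsum
  rw [← Finset.sum_filter_add_sum_filter_not A (fun t => IsPent t)]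
  have hzero : ∑ t ∈ A.filter (fun t => ¬ IsPent t), (-1 : ℤ) ^ t.card = 0 := by
    apply Finset.sum_involution (g := fun t _ => frank t)
    · -- f a + f (frank a) = 0
      intro a ha
      have ha' := Finset.mem_filter.1 ha
      obtain ⟨_, _, _, hcardd, _⟩ :=
        frank_spec (hNe a ha'.1) (hPos a ha'.1) ha'.2
      rcases hcardd with hcd | hcd
      · rw [← hcd, pow_succ]; ring
      · rw [hcd, pow_succ]; ring
    · -- frank a ≠ a
      intro a ha _
      have ha' := Finset.mem_filter.1 ha
      obtain ⟨_, _, _, hcardd, _⟩ :=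
        frank_spec (hNe a ha'.1) (hPos a ha'.1) ha'.2
      intro heq
      rw [heq] at hcardd
      omega
    · -- frank a ∈ filter
      intro a ha
      have ha' := Finset.mem_filter.1 ha
      obtain ⟨hne, hpos, hsum, _, _⟩ :=
        frank_spec (hNe a ha'.1) (hPos a ha'.1) ha'.2
      refine Finset.mem_filter.2 ⟨hmemA' _ hpos ?_, ?_⟩
      · rw [hsum]; exact ((hmemA a).1 ha'.1).2
      · exact frank_not_pent (hNe a ha'.1) (hPos a ha'.1) ha'.2
    · -- involutive
      intro a ha
      have ha' := Finset.mem_filter.1 ha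
      exact (frank_spec (hNe a ha'.1) (hPos a ha'.1) ha'.2).2.2.2.2
  rw [hzero, add_zero]
  -- now the pentagonal part
  set S := (Finset.Icc 1 (k + 1)).filter
    (fun n => n * (3 * n - 1) / 2 = k ∨ n * (3 * n + 1) / 2 = k) with hS
  set e : ℕ → Finset ℕ := fun n =>
    if n * (3 * n - 1) / 2 = k then Finset.Icc n (2 * n - 1)
    else Finset.Icc (n + 1) (2 * n) with he
  have hcard_e : ∀ n, 1 ≤ n → (e n).card = n := by
    intro n hn
    simp only [he]
    split <;> rw [Nat.card_Icc] <;> omega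
  have himg : A.filter (fun t => IsPent t) = S.image e := by
    apply Finset.Subset.antisymm
    · intro t ht
      obtain ⟨htA, a, ha1, hcase | hcase⟩ := Finset.mem_filter.1 ht
      · -- t = Icc a (2a-1)
        have hsum : t.sum id = k := ((hmemA t).1 htA).2
        have hsum2 : a * (3 * a - 1) = 2 * k := by
          have h1 := sum_Icc_left a ha1
          have h2 : t.sum id = ∑ i ∈ Finset.Icc a (2 * a - 1), i := by
            rw [hcase]; rfl
          omega
        have hcond : a * (3 * a - 1) / 2 = k := div_left_eq.2 hsum2
        refine Finset.mem_image.2 ⟨a, ?_, ?_⟩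
        · rw [hS, Finset.mem_filter, Finset.mem_Icc]
          refine ⟨⟨ha1, ?_⟩, Or.inl hcond⟩
          obtain ⟨c, rfl⟩ : ∃ c, a = c + 1 := ⟨a - 1, by omega⟩
          have h3 : 3 * (c + 1) - 1 = 3 * c + 2 := by omega
          rw [h3] at hsum2
          nlinarith [hsum2]
        · rw [he]; simp only [hcond, if_pos]; exact hcase.symm
      · -- t = Icc (a+1) (2a)
        have hsum : t.sum id = k := ((hmemA t).1 htA).2
        have hsum2 : a * (3 * a + 1) = 2 * k := by
          have h1 := sum_Icc_right a ha1
          have h2 : t.sum id = ∑ i ∈ Finset.Icc (a + 1) (2 * a), i := by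
            rw [hcase]; rfl
          omega
        have hcond : a * (3 * a + 1) / 2 = k := div_right_eq.2 hsum2
        have hnot : ¬ (a * (3 * a - 1) / 2 = k) := by
          intro hc
          exact not_both ha1 (div_left_eq.1 hc) hsum2
        refine Finset.mem_image.2 ⟨a, ?_, ?_⟩
        · rw [hS, Finset.mem_filter, Finset.mem_Icc]
          refine ⟨⟨ha1, ?_⟩, Or.inr hcond⟩
          nlinarith [hsum2, ha1]
        · rw [he]; simp only [hnot, if_neg, if_false]; exact hcase.symm
    · intro t ht
      obtain ⟨n, hnS, rfl⟩ := Finset.mem_image.1 ht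
      rw [hS, Finset.mem_filter, Finset.mem_Icc] at hnS
      obtain ⟨⟨hn1, _⟩, hdisj⟩ := hnS
      by_cases hcond : n * (3 * n - 1) / 2 = k
      · have hsum2 : n * (3 * n - 1) = 2 * k := div_left_eq.1 hcond
        have hen : e n = Finset.Icc n (2 * n - 1) := by rw [he]; simp only [hcond, if_pos]
        have hub : 2 * n - 1 ≤ k := by
          obtain ⟨c, rfl⟩ : ∃ c, n = c + 1 := ⟨n - 1, by omega⟩
          have h3 : 3 * (c + 1) - 1 = 3 * c + 2 := by omega
          rw [h3] at hsum2
          have h5 : 2 * c + 1 ≤ k := by nlinarith [hsum2]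
          omega
        refine Finset.mem_filter.2 ⟨hmemA' _ ?_ ?_, ⟨n, hn1, Or.inl hen⟩⟩
        · intro x hx
          rw [hen, Finset.mem_Icc] at hx; omega
        · have h1 := sum_Icc_left n hn1
          have h2 : (e n).sum id = ∑ i ∈ Finset.Icc n (2 * n - 1), i := by
            rw [hen]; rfl
          omega
      · have hcond2 : n * (3 * n + 1) / 2 = k := by tauto
        have hsum2 : n * (3 * n + 1) = 2 * k := div_right_eq.1 hcond2
        have hen : e n = Finset.Icc (n + 1) (2 * n) := by
          rw [he]; simp only [hcond, if_neg, if_false]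
        have hub : 2 * n ≤ k := by nlinarith [hsum2, hn1]
        refine Finset.mem_filter.2 ⟨hmemA' _ ?_ ?_, ⟨n, hn1, Or.inr hen⟩⟩
        · intro x hx
          rw [hen, Finset.mem_Icc] at hx; omega
        · have h1 := sum_Icc_right n hn1
          have h2 : (e n).sum id = ∑ i ∈ Finset.Icc (n + 1) (2 * n), i := by
            rw [hen]; rfl
          omega
  have hmemS : ∀ n ∈ S, 1 ≤ n := by
    intro n hn
    rw [hS, Finset.mem_filter, Finset.mem_Icc] at hn
    exact hn.1.1
  have hinj : ∀ x ∈ S, ∀ y ∈ S, e x = e y → x = y := by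
    intro x hx y hy hxy
    have := hcard_e x (hmemS x hx)
    have := hcard_e y (hmemS y hy)
    have : (e x).card = (e y).card := by rw [hxy]
    omega
  rw [himg, Finset.sum_image hinj]
  have hleft : ∑ n ∈ S, (-1 : ℤ) ^ (e n).card = ∑ n ∈ S, (-1 : ℤ) ^ n :=
    Finset.sum_congr rfl (fun n hn => by rw [hcard_e n (hmemS n hn)])
  rw [hleft]
  -- finally, RHS sum reduces to sum over S
  rw [← Finset.sum_filter_add_sum_filter_not (Finset.Icc 1 (k + 1))
    (fun n => n * (3 * n - 1) / 2 = k ∨ n * (3 * n + 1) / 2 = k)]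
  have hz2 : ∑ n ∈ (Finset.Icc 1 (k + 1)).filter
      (fun n => ¬ (n * (3 * n - 1) / 2 = k ∨ n * (3 * n + 1) / 2 = k)),
      (-1 : ℤ) ^ n * ((if n * (3 * n - 1) / 2 = k then 1 else 0)
        + (if n * (3 * n + 1) / 2 = k then 1 else 0)) = 0 := by
    apply Finset.sum_eq_zero
    intro n hn
    have := (Finset.mem_filter.1 hn).2
    push_neg at this
    rw [if_neg this.1, if_neg this.2]
    ring
  rw [hz2, add_zero]
  apply Finset.sum_congr rfl
  intro n hn
  have hn' := Finset.mem_filter.1 hn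
  have hn1 : 1 ≤ n := (Finset.mem_Icc.1 hn'.1).1
  rcases hn'.2 with hc | hc
  · have hnot : ¬ (n * (3 * n + 1) / 2 = k) := by
      intro hc2
      exact not_both hn1 (div_left_eq.1 hc) (div_right_eq.1 hc2)
    rw [if_pos hc, if_neg hnot]; ring
  · by_cases hc1 : n * (3 * n - 1) / 2 = k
    · exact absurd (div_right_eq.1 hc) (not_both hn1 (div_left_eq.1 hc1))
    · rw [if_neg hc1, if_pos hc]; ring

open PowerSeries in
lemma coeff_prod_eq (k : ℕ) :
    PowerSeries.coeff (R := ℤ) k (∏ j ∈ Finset.Icc 1 k, (1 - PowerSeries.X ^ j)) =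
      ∑ t ∈ ((Finset.Icc 1 k).powerset.filter fun t => t.sum id = k), (-1 : ℤ) ^ t.card := by
  classical
  have h1 : ∏ j ∈ Finset.Icc 1 k, (1 - (PowerSeries.X : ℤ⟦X⟧) ^ j)
      = ∑ t ∈ (Finset.Icc 1 k).powerset,
          PowerSeries.C (R := ℤ) ((-1) ^ t.card) * PowerSeries.X ^ (t.sum id) := by
    calc ∏ j ∈ Finset.Icc 1 k, (1 - (PowerSeries.X : ℤ⟦X⟧) ^ j)
        = ∏ j ∈ Finset.Icc 1 k, ((-(PowerSeries.X : ℤ⟦X⟧) ^ j) + 1) := by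
          apply Finset.prod_congr rfl; intros; ring
      _ = ∑ t ∈ (Finset.Icc 1 k).powerset,
            (∏ i ∈ t, -(PowerSeries.X : ℤ⟦X⟧) ^ i) * ∏ i ∈ (Finset.Icc 1 k) \ t, 1 :=
          Finset.prod_add _ _ _
      _ = _ := by
          apply Finset.sum_congr rfl
          intro t _
          rw [Finset.prod_const_one, mul_one]
          have h2 : ∏ i ∈ t, -(PowerSeries.X : ℤ⟦X⟧) ^ i
              = ((-1 : ℤ⟦X⟧) ^ t.card) * PowerSeries.X ^ (t.sum id) := by
            rw [← Finset.prod_pow_eq_pow_sum, ← Finset.prod_const (-1 : ℤ⟦X⟧),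
              ← Finset.prod_mul_distrib]
            apply Finset.prod_congr rfl
            intros; simp [id]
          rw [h2]
          congr 1
          simp [map_pow]
  rw [h1, map_sum]
  rw [Finset.sum_filter]
  apply Finset.sum_congr rfl
  intro t _
  rw [PowerSeries.coeff_C_mul_X_pow]
  by_cases h : t.sum id = k
  · rw [if_pos h, if_pos h.symm]
  · rw [if_neg h, if_neg (fun hc => h hc.symm)]

end PentAux



/-- The infinite product `∏_{j=1}^∞ (1 - q^j)` in `ℤ[[q]]`: for each `k`, the coefficient
of `q^k` in the partial products `∏_{j=1}^N (1 - q^j)` stabilizes for `N ≥ k`, and the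
infinite product is the power series with these stabilized coefficients. -/
noncomputable def eulerProduct : PowerSeries ℤ :=
  PowerSeries.mk fun k =>
    PowerSeries.coeff (R := ℤ) k (∏ j ∈ Finset.Icc 1 k, (1 - PowerSeries.X ^ j))

/-- The sum `1 + ∑_{n=1}^∞ f n` of a family of power series in `ℤ[[q]]` whose `n`-th
member (for `n ≥ 1`) has `q`-adic order at least `n`. -/
noncomputable def onePlusSeriesSum (f : ℕ → PowerSeries ℤ) : PowerSeries ℤ :=
  1 + PowerSeries.mk fun d =>
    PowerSeries.coeff (R := ℤ) d (∑ n ∈ Finset.Icc 1 (d + 1), f n)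

open PentAux PowerSeries in
lemma coeff_rhs (k : ℕ) :
    PowerSeries.coeff (R := ℤ) k (onePlusSeriesSum fun n =>
        (-1) ^ n * (PowerSeries.X ^ (n * (3 * n - 1) / 2)
          + PowerSeries.X ^ (n * (3 * n + 1) / 2)))
      = (if k = 0 then 1 else 0)
        + ∑ n ∈ Finset.Icc 1 (k + 1), (-1 : ℤ) ^ n *
            ((if n * (3 * n - 1) / 2 = k then 1 else 0)
              + (if n * (3 * n + 1) / 2 = k then 1 else 0)) := by
  rw [onePlusSeriesSum, map_add, PowerSeries.coeff_one, PowerSeries.coeff_mk, map_sum]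
  congr 1
  apply Finset.sum_congr rfl
  intro n _
  have h1 : ((-1 : ℤ⟦X⟧) ^ n) = PowerSeries.C (R := ℤ) ((-1) ^ n) := by simp [map_pow]
  rw [h1, PowerSeries.coeff_C_mul, map_add, PowerSeries.coeff_X_pow,
    PowerSeries.coeff_X_pow]
  congr 2
  · by_cases h : n * (3 * n - 1) / 2 = k
    · rw [if_pos h.symm, if_pos h]
    · rw [if_neg (fun hc => h hc.symm), if_neg h]
  · by_cases h : n * (3 * n + 1) / 2 = k
    · rw [if_pos h.symm, if_pos h]
    · rw [if_neg (fun hc => h hc.symm), if_neg h]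

/-- Euler's pentagonal number theorem:
`∏_{j=1}^∞ (1 - q^j) = 1 + ∑_{n=1}^∞ (-1)^n (q^{n(3n-1)/2} + q^{n(3n+1)/2})` in `ℤ[[q]]`. -/
theorem pentagonal_number_theorem :
    eulerProduct =
      onePlusSeriesSum fun n =>
        (-1) ^ n * (PowerSeries.X ^ (n * (3 * n - 1) / 2) + PowerSeries.X ^ (n * (3 * n + 1) / 2)) := by
  apply PowerSeries.ext
  intro k
  have hL : PowerSeries.coeff (R := ℤ) k eulerProduct =
      ∑ t ∈ ((Finset.Icc 1 k).powerset.filter fun t => t.sum id = k), (-1 : ℤ) ^ t.card := by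
    rw [eulerProduct, PowerSeries.coeff_mk, PentAux.coeff_prod_eq]
  rw [hL, coeff_rhs]
  rcases Nat.eq_zero_or_pos k with rfl | hk
  · norm_num
    decide
  · rw [if_neg (by omega), zero_add, PentAux.count k hk]
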